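/- arXiv:2410.04911 — 2 statements merged into one kernel-verified Lean document; each statement's English description precedes it below -/
import Mathlib

section
/- Let n ≥ 1, let τ > 0, and let A, B : ℝ → Matrix (Fin n) (Fin n) ℂ be continuous. Suppose U, V, u : ℝ → Matrix (Fin n) (Fin n) ℂ are differentiable and satisfy, for all t ∈ [0, τ]: U'(t) = −A(t)·U(t) with U(τ) = 1; V'(t) = −B(t)·V(t) with V(τ) = 1; and u'(t) + A(t)·u(t) − u(t)·B(t) = −(A(t) − B(t)) with u(τ) = 0. Then u(t) = U(t)·V(t)⁻¹ − 1 for all t ∈ [0, τ]; in particular u(0) = U(0)·V(0)⁻¹ − 1 (the pseudolinearization identity I_{E(A,B)}(A − B) = C_A C_B⁻¹ − Id). -/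
attribute [local instance] Matrix.frobeniusNormedAddCommGroup Matrix.frobeniusNormedSpace
attribute [local instance] Matrix.frobeniusNormedRing Matrix.frobeniusNormedAlgebra

open Set

/-- Uniqueness for the linear ODE `f' = -(C t * f)`: one combined lemma giving both
forward (initial value at `a`) and backward (initial value at `b`) uniqueness of the
zero solution on `Icc a b`. -/
lemma lin_ode_zero (n : ℕ) (C : ℝ → Matrix (Fin n) (Fin n) ℂ) (hC : Continuous C)
    (a b : ℝ) (hab : a ≤ b) (f : ℝ → Matrix (Fin n) (Fin n) ℂ)
    (hf : Differentiable ℝ f)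
    (hder : ∀ t ∈ Set.Icc a b, deriv f t = -(C t * f t)) :
    (f a = 0 → ∀ t ∈ Set.Icc a b, f t = 0) ∧
      (f b = 0 → ∀ t ∈ Set.Icc a b, f t = 0) := by
  -- bound for `C` on the interval
  obtain ⟨K, hK⟩ := (isCompact_Icc (a := a) (b := b)).exists_bound_of_continuousOn
    hC.continuousOn
  set Kn : NNReal := ⟨max K 0, le_max_right _ _⟩ with hKn
  -- clamp time into the interval
  set p : ℝ → ℝ := fun t => min (max t a) b with hp
  have hpmem : ∀ t, p t ∈ Set.Icc a b := by
    intro t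
    constructor
    · exact le_min (le_max_right _ _) hab
    · exact min_le_right _ _
  have hpeq : ∀ t ∈ Set.Icc a b, p t = t := by
    intro t ht
    simp only [hp]
    rw [max_eq_left ht.1, min_eq_left ht.2]
  set v : ℝ → Matrix (Fin n) (Fin n) ℂ → Matrix (Fin n) (Fin n) ℂ :=
    fun t y => -(C (p t) * y) with hv
  have hlip : ∀ t, LipschitzOnWith Kn (v t) Set.univ := by
    intro t
    apply LipschitzWith.lipschitzOnWith
    apply LipschitzWith.of_dist_le_mul
    intro y y'
    have : v t y - v t y' = C (p t) * (y' - y) := by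
      simp only [hv]
      noncomm_ring
    rw [dist_eq_norm, this]
    calc ‖C (p t) * (y' - y)‖ ≤ ‖C (p t)‖ * ‖y' - y‖ := norm_mul_le _ _
      _ ≤ (Kn : ℝ) * ‖y' - y‖ := by
          apply mul_le_mul_of_nonneg_right _ (norm_nonneg _)
          exact le_trans (hK _ (hpmem t)) (le_max_left _ _)
      _ = (Kn : ℝ) * dist y y' := by rw [dist_eq_norm, norm_sub_rev]
  have hfc : ContinuousOn f (Set.Icc a b) := hf.continuous.continuousOn
  have hgc : ContinuousOn (fun _ : ℝ => (0 : Matrix (Fin n) (Fin n) ℂ)) (Set.Icc a b) :=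
    continuousOn_const
  have hfd : ∀ t ∈ Set.Icc a b, HasDerivAt f (v t (f t)) t := by
    intro t ht
    have h2 := (hf t).hasDerivAt
    replace h2 := h2.congr_deriv (hder t ht)
    have h3 : v t (f t) = -(C t * f t) := by rw [hv]; simp only; rw [hpeq t ht]
    rw [h3]
    exact h2
  have hgd : ∀ t : ℝ, HasDerivAt (fun _ : ℝ => (0 : Matrix (Fin n) (Fin n) ℂ)) (v t 0) t := by
    intro t
    have : v t 0 = 0 := by simp [hv]
    rw [this]
    exact hasDerivAt_const _ _
  constructor
  · intro ha0
    intro t ht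
    have := ODE_solution_unique_of_mem_Icc_right (fun t _ => hlip t) hfc
      (fun s hs => (hfd s ⟨hs.1, le_of_lt hs.2⟩).hasDerivWithinAt)
      (fun _ _ => Set.mem_univ _) hgc
      (fun s _ => (hgd s).hasDerivWithinAt) (fun _ _ => Set.mem_univ _) ha0
    exact this ht
  · intro hb0
    intro t ht
    have := ODE_solution_unique_of_mem_Icc_left (fun t _ => hlip t) hfc
      (fun s hs => (hfd s ⟨le_of_lt hs.1, hs.2⟩).hasDerivWithinAt)
      (fun _ _ => Set.mem_univ _) hgc
      (fun s _ => (hgd s).hasDerivWithinAt) (fun _ _ => Set.mem_univ _) hb0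
    exact this ht

/-- pseudolinearization identity: if `U' = −A·U`, `U(τ) = 1`,
`V' = −B·V`, `V(τ) = 1`, and `u' + A·u − u·B = −(A − B)` with `u(τ) = 0` on `[0, τ]`,
then `u(t) = U(t)·V(t)⁻¹ − 1` on `[0, τ]`; in particular `u(0) = U(0)·V(0)⁻¹ − 1`. -/
theorem pseudolinearization_identity
    (n : ℕ) (hn : 1 ≤ n) (τ : ℝ) (hτ : 0 < τ)
    (A B : ℝ → Matrix (Fin n) (Fin n) ℂ) (hA : Continuous A) (hB : Continuous B)
    (U V u : ℝ → Matrix (Fin n) (Fin n) ℂ)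
    (hUdiff : Differentiable ℝ U) (hVdiff : Differentiable ℝ V)
    (hudiff : Differentiable ℝ u)
    (hUode : ∀ t ∈ Set.Icc (0 : ℝ) τ, deriv U t = -(A t * U t)) (hUterm : U τ = 1)
    (hVode : ∀ t ∈ Set.Icc (0 : ℝ) τ, deriv V t = -(B t * V t)) (hVterm : V τ = 1)
    (huode : ∀ t ∈ Set.Icc (0 : ℝ) τ,
      deriv u t + A t * u t - u t * B t = -(A t - B t)) (huterm : u τ = 0) :
    (∀ t ∈ Set.Icc (0 : ℝ) τ, u t = U t * (V t)⁻¹ - 1) ∧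
      u 0 = U 0 * (V 0)⁻¹ - 1 := by
  -- the function w = (u + 1) V - U satisfies w' = -A w, w(τ) = 0
  set w : ℝ → Matrix (Fin n) (Fin n) ℂ := fun t => (u t + 1) * V t - U t with hw
  have hwdiff : Differentiable ℝ w :=
    ((hudiff.add_const 1).mul hVdiff).sub hUdiff
  have hwder : ∀ t ∈ Set.Icc (0 : ℝ) τ, deriv w t = -(A t * w t) := by
    intro t ht
    have hdu : deriv u t = -(A t - B t) - A t * u t + u t * B t := by
      have := huode t ht
      linear_combination (norm := noncomm_ring) this
    have h1 : HasDerivAt w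
        (deriv u t * V t + (u t + 1) * deriv V t - deriv U t) t := by
      have hu' : HasDerivAt (fun s => u s + 1) (deriv u t) t :=
        (hudiff t).hasDerivAt.add_const 1
      exact (hu'.mul (hVdiff t).hasDerivAt).sub (hUdiff t).hasDerivAt
    rw [show deriv w t = _ from h1.deriv, hdu, hVode t ht, hUode t ht, hw]
    noncomm_ring
  have hwτ : w τ = 0 := by
    simp [hw, huterm, hVterm, hUterm]
  have hw0 : ∀ t ∈ Set.Icc (0 : ℝ) τ, w t = 0 :=
    (lin_ode_zero n A hA 0 τ (le_of_lt hτ) w hwdiff hwder).2 hwτ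
  -- V t is invertible on [0, τ]
  have hVunit : ∀ t ∈ Set.Icc (0 : ℝ) τ, IsUnit (V t).det := by
    intro t₀ ht₀
    by_contra h
    have hdet : (V t₀).det = 0 := by
      simpa [isUnit_iff_ne_zero] using h
    obtain ⟨x, hx0, hx⟩ := (Matrix.exists_mulVec_eq_zero_iff).mpr hdet
    set M : Matrix (Fin n) (Fin n) ℂ := Matrix.of (fun i _ => x i) with hM
    have hVM : V t₀ * M = 0 := by
      ext i j
      have : (V t₀ * M) i j = (V t₀).mulVec x i := by
        simp [hM, Matrix.mul_apply, Matrix.mulVec, dotProduct]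
      rw [this, hx]
      rfl
    set Y : ℝ → Matrix (Fin n) (Fin n) ℂ := fun t => V t * M with hY
    have hYdiff : Differentiable ℝ Y := hVdiff.mul (differentiable_const M)
    have hYder : ∀ t ∈ Set.Icc t₀ τ, deriv Y t = -(B t * Y t) := by
      intro t ht
      have hsub : t ∈ Set.Icc (0 : ℝ) τ := ⟨le_trans ht₀.1 ht.1, ht.2⟩
      have h1 : HasDerivAt Y (deriv V t * M + V t * 0) t :=
        (hVdiff t).hasDerivAt.mul (hasDerivAt_const t M)
      rw [show deriv Y t = _ from h1.deriv, hVode t hsub, hY]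
      noncomm_ring
    have hYzero : ∀ t ∈ Set.Icc t₀ τ, Y t = 0 :=
      (lin_ode_zero n B hB t₀ τ ht₀.2 Y hYdiff hYder).1 (by simp [hY, hVM])
    have hYτ : Y τ = M := by simp [hY, hVterm]
    have hMτ : M = 0 := by
      rw [← hYτ]
      exact hYzero τ ⟨ht₀.2, le_refl τ⟩
    obtain ⟨i, hi⟩ := Function.ne_iff.mp hx0
    have : M i ⟨0, hn⟩ = 0 := by rw [hMτ]; rfl
    exact hi (by simpa [hM] using this)
  have key : ∀ t ∈ Set.Icc (0 : ℝ) τ, u t = U t * (V t)⁻¹ - 1 := by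
    intro t ht
    have h1 : (u t + 1) * V t = U t := by
      have h0 := hw0 t ht
      rw [hw] at h0
      exact sub_eq_zero.mp h0
    have h2 : (u t + 1) * V t * (V t)⁻¹ = U t * (V t)⁻¹ := by rw [h1]
    rw [mul_assoc, Matrix.mul_nonsing_inv _ (hVunit t ht), mul_one] at h2
    exact eq_sub_of_add_eq h2
  exact ⟨key, key 0 ⟨le_refl 0, le_of_lt hτ⟩⟩
end

section
/- Let n ≥ 1, let τ > 0, and let A, B : ℝ → Matrix (Fin n) (Fin n) ℂ be continuous. Suppose U, V, u : ℝ → Matrix (Fin n) (Fin n) ℂ are differentiable and satisfy, for all t ∈ [0, τ]: U'(t) = −A(t)·U(t) with U(τ) = 1; V'(t) = −B(t)·V(t) with V(τ) = 1; and u'(t) + A(t)·u(t) − u(t)·B(t) = −(A(t) − B(t)) with u(τ) = 0. If the scattering data agree, i.e. U(0) = V(0), then u(0) = 0. (Equality of nonabelian ray transforms C_A = C_B forces the attenuated ray transform with attenuation E(A,B) of A − B to vanish.) -/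
attribute [local instance] Matrix.frobeniusNormedAddCommGroup Matrix.frobeniusNormedSpace
attribute [local instance] Matrix.frobeniusNormedRing Matrix.frobeniusNormedAlgebra

open Set

/-- Forward Grönwall: a differentiable function whose derivative is dominated by `K * ‖w‖`
on `[a, b]` and vanishes at `a` vanishes on all of `[a, b]`. -/
lemma zero_on_of_deriv_le {E : Type*} [NormedAddCommGroup E] [NormedSpace ℝ E]
    {w : ℝ → E} {K a b : ℝ} (hw : Differentiable ℝ w)
    (h : ∀ t ∈ Set.Icc a b, ‖deriv w t‖ ≤ K * ‖w t‖) (h0 : w a = 0) :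
    ∀ t ∈ Set.Icc a b, w t = 0 := by
  intro t ht
  have key := norm_le_gronwallBound_of_norm_deriv_right_le (f := w) (f' := deriv w)
    (δ := 0) (K := K) (ε := 0) (a := a) (b := b)
    (hw.continuous.continuousOn)
    (fun s _ => (hw s).hasDerivAt.hasDerivWithinAt)
    (by simp [h0])
    (fun s hs => by simpa using h s (Set.mem_Icc_of_Ico hs)) t ht
  rw [gronwallBound_ε0_δ0] at key
  exact norm_le_zero_iff.mp key

/-- Backward Grönwall: as above but with the vanishing condition at the right endpoint. -/
lemma zero_on_of_deriv_le' {E : Type*} [NormedAddCommGroup E] [NormedSpace ℝ E]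
    {w : ℝ → E} {K a b : ℝ} (hw : Differentiable ℝ w)
    (h : ∀ t ∈ Set.Icc a b, ‖deriv w t‖ ≤ K * ‖w t‖) (h0 : w b = 0) :
    ∀ t ∈ Set.Icc a b, w t = 0 := by
  set g : ℝ → E := fun s => w (a + b - s) with hg
  have hsub : Differentiable ℝ fun s : ℝ => a + b - s :=
    (differentiable_const _).sub differentiable_id
  have hgd : ∀ s : ℝ, HasDerivAt g ((-1 : ℝ) • deriv w (a + b - s)) s := by
    intro s
    have h1 : HasDerivAt (fun s : ℝ => a + b - s) (-1) s := by
      simpa using (hasDerivAt_id s).const_sub (a + b)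
    exact (hw (a + b - s)).hasDerivAt.scomp s h1
  have hgdiff : Differentiable ℝ g := fun s => ((hgd s).differentiableAt)
  have hgz : ∀ s ∈ Set.Icc a b, g s = 0 := by
    apply zero_on_of_deriv_le (K := K) hgdiff
    · intro s hs
      have hmem : a + b - s ∈ Set.Icc a b := by
        constructor <;> [linarith [hs.2]; linarith [hs.1]]
      rw [(hgd s).deriv]
      simpa using h _ hmem
    · simpa [hg] using h0
  intro t ht
  have hmem : a + b - t ∈ Set.Icc a b := by
    constructor <;> [linarith [ht.2]; linarith [ht.1]]
  have := hgz (a + b - t) hmem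
  simpa [hg] using this

/-- with `U`, `V`, `u` as in the pseudolinearization setup
(`U' = −A·U`, `U(τ) = 1`; `V' = −B·V`, `V(τ) = 1`;
`u' + A·u − u·B = −(A − B)`, `u(τ) = 0` on `[0, τ]`), equality of the scattering
data `U(0) = V(0)` forces `u(0) = 0`. -/
theorem equal_scattering_data_kills_attenuated_transform
    (n : ℕ) (hn : 1 ≤ n) (τ : ℝ) (hτ : 0 < τ)
    (A B : ℝ → Matrix (Fin n) (Fin n) ℂ) (hA : Continuous A) (hB : Continuous B)
    (U V u : ℝ → Matrix (Fin n) (Fin n) ℂ)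
    (hUdiff : Differentiable ℝ U) (hVdiff : Differentiable ℝ V)
    (hudiff : Differentiable ℝ u)
    (hUode : ∀ t ∈ Set.Icc (0 : ℝ) τ, deriv U t = -(A t * U t)) (hUterm : U τ = 1)
    (hVode : ∀ t ∈ Set.Icc (0 : ℝ) τ, deriv V t = -(B t * V t)) (hVterm : V τ = 1)
    (huode : ∀ t ∈ Set.Icc (0 : ℝ) τ,
      deriv u t + A t * u t - u t * B t = -(A t - B t)) (huterm : u τ = 0)
    (hscat : U 0 = V 0) :
    u 0 = 0 := by
  -- bounds on the attenuations
  obtain ⟨KA, hKA⟩ := isCompact_Icc.exists_bound_of_continuousOn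
    (s := Set.Icc (0:ℝ) τ) hA.continuousOn
  obtain ⟨KB, hKB⟩ := isCompact_Icc.exists_bound_of_continuousOn
    (s := Set.Icc (0:ℝ) τ) hB.continuousOn
  -- Step 1: w := u·V − (U − V) solves w' = −A·w with w(τ) = 0, hence w ≡ 0 on [0, τ].
  set w : ℝ → Matrix (Fin n) (Fin n) ℂ := fun t => u t * V t - (U t - V t) with hw
  have hwd : ∀ t : ℝ, HasDerivAt w
      (deriv u t * V t + u t * deriv V t - (deriv U t - deriv V t)) t := by
    intro t
    exact (((hudiff t).hasDerivAt.mul (hVdiff t).hasDerivAt)).sub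
      ((hUdiff t).hasDerivAt.sub (hVdiff t).hasDerivAt)
  have hwdiff : Differentiable ℝ w := fun t => (hwd t).differentiableAt
  have hwode : ∀ t ∈ Set.Icc (0:ℝ) τ, deriv w t = -(A t * w t) := by
    intro t ht
    have hu' : deriv u t = u t * B t - A t * u t - (A t - B t) := by
      have := huode t ht
      linear_combination (norm := abel) this
    rw [show deriv w t = deriv u t * V t + u t * deriv V t - (deriv U t - deriv V t) from (hwd t).deriv, hu', hUode t ht, hVode t ht, hw]
    noncomm_ring
  have hwzero : ∀ t ∈ Set.Icc (0:ℝ) τ, w t = 0 := by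
    apply zero_on_of_deriv_le' (K := KA) hwdiff
    · intro t ht
      change ‖deriv w t‖ ≤ KA * ‖w t‖
      rw [hwode t ht, norm_neg]
      calc ‖A t * w t‖ ≤ ‖A t‖ * ‖w t‖ := norm_mul_le _ _
        _ ≤ KA * ‖w t‖ := by
            exact mul_le_mul_of_nonneg_right (hKA t ht) (norm_nonneg _)
    · simp [hw, huterm, hUterm, hVterm]
  have huV : u 0 * V 0 = 0 := by
    have h0 := hwzero 0 ⟨le_refl 0, le_of_lt hτ⟩
    rw [hw] at h0
    simp only at h0
    rw [hscat] at h0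
    simpa using h0
  -- Step 2: V 0 is invertible.
  have hdet : (V 0).det ≠ 0 := by
    intro hdet0
    obtain ⟨v, hv, hVv⟩ := (Matrix.exists_mulVec_eq_zero_iff).2 hdet0
    set N : Matrix (Fin n) (Fin n) ℂ := Matrix.of fun i _ => v i with hN
    have hVN : V 0 * N = 0 := by
      ext i j
      simpa [hN, Matrix.mul_apply, Matrix.mulVec, dotProduct] using
        congrFun hVv i
    set y : ℝ → Matrix (Fin n) (Fin n) ℂ := fun t => V t * N with hy
    have hyd : ∀ t : ℝ, HasDerivAt y (deriv V t * N) t :=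
      fun t => (hVdiff t).hasDerivAt.mul_const N
    have hydiff : Differentiable ℝ y := fun t => (hyd t).differentiableAt
    have hyzero : ∀ t ∈ Set.Icc (0:ℝ) τ, y t = 0 := by
      apply zero_on_of_deriv_le (K := KB) hydiff
      · intro t ht
        rw [(hyd t).deriv, hVode t ht]
        have : -(B t * V t) * N = -(B t * y t) := by rw [hy]; noncomm_ring
        rw [this, norm_neg]
        calc ‖B t * y t‖ ≤ ‖B t‖ * ‖y t‖ := norm_mul_le _ _
          _ ≤ KB * ‖y t‖ := mul_le_mul_of_nonneg_right (hKB t ht) (norm_nonneg _)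
      · simpa [hy] using hVN
    have hNτ : N = 0 := by
      have := hyzero τ ⟨le_of_lt hτ, le_refl τ⟩
      simpa [hy, hVterm] using this
    apply hv
    funext i
    have : N i ⟨0, hn⟩ = 0 := by rw [hNτ]; rfl
    simpa [hN] using this
  have hunit : IsUnit (V 0).det := isUnit_iff_ne_zero.mpr hdet
  calc u 0 = u 0 * (V 0 * (V 0)⁻¹) := by rw [Matrix.mul_nonsing_inv _ hunit, mul_one]
    _ = (u 0 * V 0) * (V 0)⁻¹ := by rw [mul_assoc]
    _ = 0 := by rw [huV, zero_mul]
end
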